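/- Let $R$ be a Noetherian ring of characteristic $p > 0$ and $I$ an ideal. Then the tight closure $I^*$ is contained in the integral closure $\bar{I}$ of $I$. -/

import Mathlib

/-- The bracket power `I^{[q]}`: the ideal generated by `q`-th powers of
elements of `I`. -/
def bracketPower {R : Type} [CommRing R] (I : Ideal R) (q : ℕ) : Ideal R :=
  Ideal.span ((· ^ q) '' (I : Set R))

/-- The tight closure of an ideal `I` in a ring of characteristic `p`. -/
def tightClosure {R : Type} [CommRing R] (p : ℕ) (I : Ideal R) : Set R :=
  {x | ∃ c : R, (∀ P ∈ minimalPrimes R, c ∉ P) ∧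
    ∃ e₀ : ℕ, ∀ e : ℕ, e₀ ≤ e → c * x ^ p ^ e ∈ bracketPower I (p ^ e)}

/-- The integral closure of an ideal `I`: the set of `x` satisfying an
equation `x^n + a₁ x^(n-1) + ⋯ + aₙ = 0` with `aᵢ ∈ Iⁱ`. -/
def idealIntegralClosure {R : Type} [CommRing R] (I : Ideal R) : Set R :=
  {x | ∃ n : ℕ, 0 < n ∧ ∃ a : ℕ → R, (∀ i : ℕ, 1 ≤ i → i ≤ n → a i ∈ I ^ i) ∧
    x ^ n + ∑ i ∈ Finset.Icc 1 n, a i * x ^ (n - i) = 0}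


section Aux


open Polynomial


variable {R : Type} [CommRing R]

/-- `z` is the value at `x` of a monic polynomial whose coefficient of `X^k`
lies in `I^(deg - k)`. -/
def Shaped (I : Ideal R) (x z : R) : Prop :=
  ∃ f : R[X], f.Monic ∧ (∀ k : ℕ, f.coeff k ∈ I ^ (f.natDegree - k)) ∧ f.eval x = z

lemma Shaped.one (I : Ideal R) (x : R) : Shaped I x 1 :=
  ⟨1, monic_one, by simp [Ideal.one_eq_top], by simp⟩

lemma Shaped.mul {I : Ideal R} {x z w : R} (hz : Shaped I x z) (hw : Shaped I x w) :
    Shaped I x (z * w) := by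
  obtain ⟨f, hf, hfc, rfl⟩ := hz
  obtain ⟨g, hg, hgc, rfl⟩ := hw
  refine ⟨f * g, hf.mul hg, ?_, by simp⟩
  intro k
  rw [hf.natDegree_mul hg, coeff_mul]
  refine Ideal.sum_mem _ fun c hc => ?_
  have h1 : f.coeff c.1 * g.coeff c.2 ∈ I ^ (f.natDegree - c.1) * I ^ (g.natDegree - c.2) :=
    Ideal.mul_mem_mul (hfc c.1) (hgc c.2)
  rw [← pow_add] at h1
  refine Ideal.pow_le_pow_right ?_ h1
  have hck := Finset.HasAntidiagonal.mem_antidiagonal.mp hc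
  omega

lemma Shaped.pow {I : Ideal R} {x z : R} (hz : Shaped I x z) (k : ℕ) : Shaped I x (z ^ k) := by
  induction k with
  | zero => simpa using Shaped.one I x
  | succ k ih => rw [pow_succ]; exact ih.mul hz

lemma Shaped.to_closure [Nontrivial R] {I : Ideal R} {x z : R} (h : Shaped I x z)
    (hz : z = 0) : x ∈ idealIntegralClosure I := by
  obtain ⟨f, hf, hfc, hev⟩ := h
  set n := f.natDegree with hn
  have hn0 : 0 < n := by
    rcases Nat.eq_zero_or_pos n with h0 | h
    · exfalso
      have : f = 1 := hf.natDegree_eq_zero.mp h0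
      rw [this] at hev
      simp at hev
      exact one_ne_zero (hev.trans hz)
    · exact h
  refine ⟨n, hn0, fun i => f.coeff (n - i), fun i hi1 hin => ?_, ?_⟩
  · have := hfc (n - i)
    rwa [Nat.sub_sub_self hin] at this
  · have hsum : f.eval x = ∑ i ∈ Finset.range (n + 1), f.coeff i * x ^ i :=
      eval_eq_sum_range x
    rw [Finset.sum_range_succ] at hsum
    have hlead : f.coeff n = 1 := hf.coeff_natDegree
    have hre : ∑ i ∈ Finset.Icc 1 n, f.coeff (n - i) * x ^ (n - i)
        = ∑ k ∈ Finset.range n, f.coeff k * x ^ k := by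
      refine Finset.sum_nbij' (fun i => n - i) (fun k => n - k) ?_ ?_ ?_ ?_ ?_
      · intro a ha
        simp only [Finset.mem_Icc] at ha
        simp only [Finset.mem_range]
        omega
      · intro a ha
        simp only [Finset.mem_range] at ha
        simp only [Finset.mem_Icc]
        omega
      · intro a ha
        simp only [Finset.mem_Icc] at ha
        omega
      · intro a ha
        simp only [Finset.mem_range] at ha
        omega
      · intro a ha
        rfl
    rw [hre]
    have heq : x ^ n + ∑ k ∈ Finset.range n, f.coeff k * x ^ k = f.eval x := by
      rw [hsum, hlead, one_mul, add_comm]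
    rw [heq, hev, hz]

variable {R : Type} [CommRing R]






lemma exists_poly_of_mem_mul_pow (I : Ideal R) (x : R) (d : ℕ) :
    ∀ w : R, w ∈ I * (I + Ideal.span {x}) ^ d →
      ∃ g : R[X], g.natDegree ≤ d ∧ (∀ k : ℕ, g.coeff k ∈ I ^ (d + 1 - k)) ∧ g.eval x = w := by
  induction d with
  | zero =>
    intro w hw
    rw [pow_zero, mul_one] at hw
    refine ⟨C w, (natDegree_C w).le, ?_, by simp⟩
    intro k
    rcases Nat.eq_zero_or_pos k with rfl | hk
    · simpa using hw
    · rw [coeff_C, if_neg (by omega)]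
      exact Ideal.zero_mem _
  | succ d ih =>
    intro w hw
    have heq : I * (I + Ideal.span {x}) ^ (d + 1)
        = (I * (I + Ideal.span {x}) ^ d) * (I + Ideal.span {x}) := by ring
    rw [heq] at hw
    refine Submodule.mul_induction_on hw ?_ ?_
    · intro u hu v hv
      obtain ⟨g, hgd, hgc, hge⟩ := ih u hu
      obtain ⟨a, ha, s, hs, rfl⟩ := Submodule.mem_sup.mp hv
      obtain ⟨r, rfl⟩ := Ideal.mem_span_singleton'.mp hs
      refine ⟨g * (C r * X + C a), ?_, ?_, by simp [hge]; ring⟩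
      · refine natDegree_mul_le.trans ?_
        have h1 : (C r * X + C a).natDegree ≤ 1 := natDegree_linear_le
        omega
      · intro k
        rw [coeff_mul]
        refine Ideal.sum_mem _ fun c hc => ?_
        have hck := Finset.HasAntidiagonal.mem_antidiagonal.mp hc
        rcases Nat.lt_or_ge c.2 2 with h2 | h2
        · interval_cases h : c.2
          · -- coeff 0 of (C r * X + C a) is a
            have hco : (C r * X + C a).coeff 0 = a := by simp
            rw [hco]
            have : g.coeff c.1 * a ∈ I ^ (d + 1 - c.1) * I ^ 1 :=
              Ideal.mul_mem_mul (hgc c.1) (by simpa using ha)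
            rw [← pow_add] at this
            exact Ideal.pow_le_pow_right (by omega) this
          · have hco : (C r * X + C a).coeff 1 = r := by simp
            rw [hco]
            have hmem : g.coeff c.1 ∈ I ^ (d + 1 - c.1) := hgc c.1
            have : g.coeff c.1 * r ∈ I ^ (d + 1 - c.1) :=
              Ideal.mul_mem_right _ _ hmem
            exact Ideal.pow_le_pow_right (by omega) this
        · have hco : (C r * X + C a).coeff c.2 = 0 := by
            rcases c with ⟨c1, c2⟩
            have hd : (C r * X + C a).natDegree ≤ 1 := natDegree_linear_le
            exact coeff_eq_zero_of_natDegree_lt (by omega)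
          rw [hco, mul_zero]
          exact Ideal.zero_mem _
    · intro y z hy hz
      obtain ⟨g1, hd1, hc1, he1⟩ := hy
      obtain ⟨g2, hd2, hc2, he2⟩ := hz
      exact ⟨g1 + g2, (natDegree_add_le _ _).trans (by omega),
        fun k => by rw [coeff_add]; exact Ideal.add_mem _ (hc1 k) (hc2 k),
        by rw [eval_add, he1, he2]⟩

end Aux




set_option maxHeartbeats 1000000
set_option synthInstance.maxHeartbeats 400000

lemma domain_lemma (R : Type) [CommRing R] [IsDomain R] [IsNoetherianRing R]
    (I : Ideal R) (x c : R) (hc : c ≠ 0)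
    (H : ∀ n : ℕ, ∃ q : ℕ, n ≤ q ∧ 0 < q ∧ c * x ^ q ∈ I ^ q) :
    ∃ d : ℕ, x ^ (d + 1) ∈ I * (I + Ideal.span {x}) ^ d := by
  classical
  by_cases hx : x = 0
  · exact ⟨0, by rw [hx, pow_one, pow_zero, mul_one]; exact I.zero_mem⟩
  set K := FractionRing R
  set φ : R →+* K := algebraMap R K with hφdef
  have hφ : Function.Injective φ := IsFractionRing.injective R K
  have hξ : φ x ≠ 0 := fun h => hx (hφ (by rw [h, map_zero]))
  obtain ⟨G, hG⟩ : ∃ G : Finset R, Ideal.span (↑G : Set R) = I :=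
    (IsNoetherian.noetherian I)
  set T : Subalgebra R K := Algebra.adjoin R ((fun a => φ a / φ x) '' (↑G : Set R)) with hT
  have hsT : ∀ a ∈ I, φ a / φ x ∈ T := by
    intro a ha
    rw [← hG] at ha
    refine Submodule.span_induction (p := fun a _ => φ a / φ x ∈ T) ?_ ?_ ?_ ?_ ha
    · intro g hg
      exact Algebra.subset_adjoin ⟨g, hg, rfl⟩
    · show φ 0 / φ x ∈ T
      rw [map_zero, zero_div]; exact T.zero_mem
    · intro y z _ _ hy hz
      show φ (y + z) / φ x ∈ T
      rw [map_add, add_div]; exact T.add_mem hy hz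
    · intro r y _ hy
      show φ (r • y) / φ x ∈ T
      rw [smul_eq_mul, map_mul, mul_div_assoc]
      exact T.mul_mem (T.algebraMap_mem r) hy
  haveI hNT : IsNoetherianRing T := by
    haveI : Algebra.FiniteType R T :=
      (Subalgebra.fg_iff_finiteType T).mp ⟨G.image (fun a => φ a / φ x), by
        rw [Finset.coe_image]⟩
    exact Algebra.FiniteType.isNoetherianRing R T
  set J : Ideal T := Ideal.span {t : T | ∃ a ∈ I, (t : K) = φ a / φ x} with hJ
  -- Key claim: images of I^q land in J^q after division by (φ x)^q
  have key : ∀ q : ℕ, ∀ y ∈ I ^ q, ∃ t ∈ J ^ q, (t : K) = φ y / (φ x) ^ q := by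
    intro q
    induction q with
    | zero =>
      intro y _
      exact ⟨algebraMap R T y, by rw [pow_zero, Ideal.one_eq_top]; exact Submodule.mem_top, by
        rw [pow_zero, div_one]; exact Subalgebra.coe_algebraMap T y⟩
    | succ q ih =>
      intro y hy
      rw [pow_succ] at hy
      refine Submodule.mul_induction_on hy ?_ ?_
      · intro m hm n hn
        obtain ⟨t, htJ, htK⟩ := ih m hm
        refine ⟨t * ⟨φ n / φ x, hsT n hn⟩, ?_, ?_⟩
        · rw [pow_succ]
          exact Ideal.mul_mem_mul htJ (Ideal.subset_span ⟨n, hn, rfl⟩)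
        · push_cast
          rw [htK, map_mul, pow_succ, div_mul_div_comm]
      · intro y1 y2 h1 h2
        obtain ⟨t1, ht1, hk1⟩ := h1
        obtain ⟨t2, ht2, hk2⟩ := h2
        refine ⟨t1 + t2, Ideal.add_mem _ ht1 ht2, ?_⟩
        push_cast
        rw [hk1, hk2, map_add, add_div]
  -- c is in all powers of J
  have hcJ : ∀ n : ℕ, algebraMap R T c ∈ J ^ n := by
    intro n
    obtain ⟨q, hq1, hq0, hcq⟩ := H n
    obtain ⟨t, htJ, htK⟩ := key q (c * x ^ q) hcq
    have ht : t = algebraMap R T c := by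
      apply Subtype.coe_injective
      show (t : K) = ((algebraMap R T c : T) : K)
      rw [htK, map_mul, map_pow, mul_div_assoc, div_self (pow_ne_zero _ hξ), mul_one]
      exact (Subalgebra.coe_algebraMap T c).symm
    rw [ht] at htJ
    exact Ideal.pow_le_pow_right hq1 htJ
  -- hence J = ⊤ by Krull intersection
  have hJtop : J = ⊤ := by
    by_contra hne
    have hbot := Ideal.iInf_pow_eq_bot_of_isDomain (I := J) hne
    have : algebraMap R T c ∈ (⊥ : Ideal T) := by
      rw [← hbot]
      exact Submodule.mem_iInf _ |>.mpr hcJ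
    rw [Ideal.mem_bot] at this
    apply hc
    have := congrArg (fun t : T => (t : K)) this
    simpa [Subalgebra.coe_algebraMap] using this
  -- Descent: elements of T multiplied by ξ^d come from (I + span x)^d
  set P : Ideal R := I + Ideal.span {x} with hP
  have hxP : x ∈ P := by
    rw [hP]
    exact Submodule.mem_sup_right (Ideal.subset_span rfl)
  have descT : ∀ z : K, z ∈ T →
      ∃ d : ℕ, ∃ y : R, y ∈ P ^ d ∧ z * (φ x) ^ d = φ y := by
    have raise : ∀ {z : K} {d : ℕ} {y : R}, y ∈ P ^ d → z * (φ x) ^ d = φ y →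
        ∀ d' : ℕ, d ≤ d' → ∃ y' : R, y' ∈ P ^ d' ∧ z * (φ x) ^ d' = φ y' := by
      intro z d y hy hz d' hd'
      refine ⟨y * x ^ (d' - d), ?_, ?_⟩
      · have : y * x ^ (d' - d) ∈ P ^ d * P ^ (d' - d) :=
          Ideal.mul_mem_mul hy (Ideal.pow_mem_pow hxP _)
        rwa [← pow_add, Nat.add_sub_cancel' hd'] at this
      · have hpow : (φ x) ^ d' = (φ x) ^ d * (φ x) ^ (d' - d) := by
          rw [← pow_add]; congr 1; omega
        rw [map_mul, map_pow, ← hz, hpow]; ring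
    intro z hz
    refine Algebra.adjoin_induction ?_ ?_ ?_ ?_ hz
    · rintro _ ⟨g, hg, rfl⟩
      refine ⟨1, g, ?_, ?_⟩
      · rw [pow_one]
        exact Submodule.mem_sup_left (hG ▸ Ideal.subset_span hg)
      · rw [pow_one, div_mul_cancel₀ _ hξ]
    · intro r
      exact ⟨0, r, by rw [pow_zero, Ideal.one_eq_top]; exact Submodule.mem_top, by rw [pow_zero, mul_one]⟩
    · rintro z1 z2 _ _ ⟨d1, y1, hy1, he1⟩ ⟨d2, y2, hy2, he2⟩
      obtain ⟨y1', hy1', he1'⟩ := raise hy1 he1 (max d1 d2) (le_max_left _ _)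
      obtain ⟨y2', hy2', he2'⟩ := raise hy2 he2 (max d1 d2) (le_max_right _ _)
      exact ⟨max d1 d2, y1' + y2', Ideal.add_mem _ hy1' hy2',
        by rw [add_mul, he1', he2', map_add]⟩
    · rintro z1 z2 _ _ ⟨d1, y1, hy1, he1⟩ ⟨d2, y2, hy2, he2⟩
      refine ⟨d1 + d2, y1 * y2, ?_, ?_⟩
      · rw [pow_add]; exact Ideal.mul_mem_mul hy1 hy2
      · rw [map_mul, ← he1, ← he2, pow_add]; ring
  -- Descent for J
  have descJ : ∀ t : T, t ∈ J →
      ∃ d : ℕ, ∃ y : R, y ∈ I * P ^ d ∧ (t : K) * (φ x) ^ (d + 1) = φ y := by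
    have raise : ∀ {z : K} {d : ℕ} {y : R}, y ∈ I * P ^ d → z * (φ x) ^ (d + 1) = φ y →
        ∀ d' : ℕ, d ≤ d' → ∃ y' : R, y' ∈ I * P ^ d' ∧ z * (φ x) ^ (d' + 1) = φ y' := by
      intro z d y hy hz d' hd'
      refine ⟨y * x ^ (d' - d), ?_, ?_⟩
      · have : y * x ^ (d' - d) ∈ (I * P ^ d) * P ^ (d' - d) :=
          Ideal.mul_mem_mul hy (Ideal.pow_mem_pow hxP _)
        rwa [mul_assoc, ← pow_add, Nat.add_sub_cancel' hd'] at this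
      · have hpow : (φ x) ^ (d' + 1) = (φ x) ^ (d + 1) * (φ x) ^ (d' - d) := by
          rw [← pow_add]; congr 1; omega
        rw [map_mul, map_pow, ← hz, hpow]; ring
    intro t ht
    rw [hJ] at ht
    refine Submodule.span_induction (R := T) (M := T)
      (p := fun t _ => ∃ d : ℕ, ∃ y : R, y ∈ I * P ^ d ∧ (t : K) * (φ x) ^ (d + 1) = φ y)
      ?_ ?_ ?_ ?_ ht
    · rintro t ⟨a, ha, hta⟩
      refine ⟨0, a, by rw [pow_zero, mul_one]; exact ha, ?_⟩
      rw [hta, zero_add, pow_one, div_mul_cancel₀ _ hξ]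
    · exact ⟨0, 0, Ideal.zero_mem _, by push_cast; rw [map_zero, zero_mul]⟩
    · rintro t1 t2 _ _ ⟨d1, y1, hy1, he1⟩ ⟨d2, y2, hy2, he2⟩
      obtain ⟨y1', hy1', he1'⟩ := raise hy1 he1 (max d1 d2) (le_max_left _ _)
      obtain ⟨y2', hy2', he2'⟩ := raise hy2 he2 (max d1 d2) (le_max_right _ _)
      refine ⟨max d1 d2, y1' + y2', Ideal.add_mem _ hy1' hy2', ?_⟩
      push_cast
      rw [add_mul, he1', he2', map_add]
    · rintro s t _ ⟨d, y, hy, he⟩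
      obtain ⟨d', y', hy', he'⟩ := descT (s : K) s.2
      refine ⟨d' + d, y' * y, ?_, ?_⟩
      · have : y' * y ∈ P ^ d' * (I * P ^ d) := Ideal.mul_mem_mul hy' hy
        rwa [show P ^ d' * (I * P ^ d) = I * P ^ (d' + d) by ring] at this
      · have : ((s • t : T) : K) = (s : K) * (t : K) := Subalgebra.coe_mul T s t
        rw [this, map_mul, ← he', ← he,
          show d' + d + 1 = d' + (d + 1) by omega, pow_add]
        ring
  -- conclude
  have h1J : (1 : T) ∈ J := hJtop ▸ Submodule.mem_top
  obtain ⟨d, y, hy, he⟩ := descJ 1 h1J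
  refine ⟨d, ?_⟩
  have : φ (x ^ (d + 1)) = φ y := by
    rw [map_pow, ← he]
    push_cast
    rw [one_mul]
  rw [hφ this]
  exact hy



section Main
variable {R : Type} [CommRing R]

/-- Let `R` be a Noetherian ring of characteristic `p > 0` and `I`
an ideal.  Then the tight closure `I^*` is contained in the integral closure
`Ī` of `I`. -/
theorem tightClosure_subset_integralClosure
    (R : Type) [CommRing R] [IsNoetherianRing R] (p : ℕ) [Fact p.Prime]
    [CharP R p] (I : Ideal R) :
    tightClosure p I ⊆ idealIntegralClosure I := by
  classical
  rcases subsingleton_or_nontrivial R with hR | hR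
  · intro x _
    exact ⟨1, one_pos, fun _ => 0, fun i _ _ => Ideal.zero_mem _, Subsingleton.elim _ _⟩
  intro x hx
  obtain ⟨c, hc, e₀, he⟩ := hx
  have hp : 1 < p := (Fact.out : p.Prime).one_lt
  have hbr : ∀ q : ℕ, bracketPower I q ≤ I ^ q := by
    intro q
    refine Ideal.span_le.mpr ?_
    rintro _ ⟨a, ha, rfl⟩
    exact Ideal.pow_mem_pow ha q
  have key : ∀ P ∈ minimalPrimes R, ∃ z : R, Shaped I x z ∧ z ∈ P := by
    intro P hP
    haveI hPp : P.IsPrime := hP.1.1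
    set π : R →+* R ⧸ P := Ideal.Quotient.mk P with hπ
    have hcne : π c ≠ 0 := fun h => hc P hP (Ideal.Quotient.eq_zero_iff_mem.mp h)
    have H : ∀ n : ℕ, ∃ q : ℕ, n ≤ q ∧ 0 < q ∧ π c * π x ^ q ∈ (I.map π) ^ q := by
      intro n
      refine ⟨p ^ max e₀ n, le_of_lt ((le_max_right e₀ n).trans_lt (Nat.lt_pow_self hp)),
        Nat.pow_pos (by omega), ?_⟩
      have h1 : c * x ^ p ^ max e₀ n ∈ I ^ p ^ max e₀ n :=
        hbr _ (he _ (le_max_left e₀ n))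
      have h2 := Ideal.mem_map_of_mem π h1
      rw [Ideal.map_pow] at h2
      simpa [map_mul, map_pow] using h2
    obtain ⟨d, hd⟩ := domain_lemma (R ⧸ P) (I.map π) (π x) (π c) hcne H
    have hmap : (I.map π) * (I.map π + Ideal.span {π x}) ^ d
        = (I * (I + Ideal.span {x}) ^ d).map π := by
      rw [Ideal.map_mul, Ideal.map_pow]
      congr 2
      rw [Submodule.add_eq_sup, Submodule.add_eq_sup, Ideal.map_sup, Ideal.map_span,
        Set.image_singleton]
    rw [hmap] at hd
    obtain ⟨w, hw, hwx⟩ := Ideal.mem_map_iff_of_surjective π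
      Ideal.Quotient.mk_surjective |>.mp hd
    obtain ⟨g, hgd, hgc, hge⟩ := exists_poly_of_mem_mul_pow I x d w hw
    have hdeg : (Polynomial.X ^ (d + 1) - g : Polynomial R).natDegree = d + 1 := by
      have h2 : g.natDegree < (Polynomial.X ^ (d + 1) : Polynomial R).natDegree := by
        rw [Polynomial.natDegree_X_pow]; omega
      rw [Polynomial.natDegree_sub_eq_left_of_natDegree_lt h2, Polynomial.natDegree_X_pow]
    refine ⟨x ^ (d + 1) - w, ⟨Polynomial.X ^ (d + 1) - g, ?_, ?_, ?_⟩, ?_⟩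
    · refine Polynomial.monic_X_pow_sub ?_
      refine lt_of_le_of_lt Polynomial.degree_le_natDegree ?_
      exact_mod_cast Nat.lt_succ_of_le hgd
    · intro k
      rw [hdeg, Polynomial.coeff_sub, Polynomial.coeff_X_pow]
      rcases Nat.lt_trichotomy k (d + 1) with hk | hk | hk
      · rw [if_neg (by omega), zero_sub]
        exact neg_mem (hgc k)
      · rw [if_pos hk]
        have hz0 : d + 1 - k = 0 := by omega
        rw [hz0, pow_zero, Ideal.one_eq_top]
        exact Submodule.mem_top
      · rw [if_neg (by omega), Polynomial.coeff_eq_zero_of_natDegree_lt (by omega),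
          zero_sub]
        exact neg_mem (Ideal.zero_mem _)
    · rw [Polynomial.eval_sub, Polynomial.eval_pow, Polynomial.eval_X, hge]
    · have : π (x ^ (d + 1) - w) = 0 := by
        rw [map_sub, hwx, map_pow, sub_self]
      exact Ideal.Quotient.eq_zero_iff_mem.mp this
  -- assemble over all minimal primes
  have hfin : (minimalPrimes R).Finite := minimalPrimes.finite_of_isNoetherianRing R
  choose z hz1 hz2 using key
  set F := hfin.toFinset with hF
  have hmemF : ∀ P : F, (P : Ideal R) ∈ minimalPrimes R := fun P =>
    hfin.mem_toFinset.mp P.2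
  set Z : R := ∏ P ∈ F.attach, z P (hmemF P) with hZ
  have hZs : Shaped I x Z :=
    Finset.prod_induction _ _ (fun _ _ => Shaped.mul) (Shaped.one I x)
      (fun P _ => hz1 _ (hmemF P))
  have hZnil : IsNilpotent Z := by
    rw [← mem_nilradical, nilradical_eq_sInf, Submodule.mem_sInf]
    intro Q hQ
    haveI hQp : Ideal.IsPrime Q := hQ
    obtain ⟨P, hPmin, hPQ⟩ := Ideal.exists_minimalPrimes_le (bot_le : ⊥ ≤ Q)
    have hPF : P ∈ F := by rw [hF, Set.Finite.mem_toFinset]; exact hPmin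
    have hdvd : z P (hmemF ⟨P, hPF⟩) ∣ Z := by
      rw [hZ]
      exact Finset.dvd_prod_of_mem _ (Finset.mem_attach F ⟨P, hPF⟩)
    obtain ⟨k, hk⟩ := hdvd
    rw [hk]
    exact Ideal.mul_mem_right _ _ (hPQ (hz2 _ (hmemF ⟨P, hPF⟩)))
  obtain ⟨k, hk⟩ := hZnil
  exact (hZs.pow k).to_closure hk

end Main
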